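/- Let G be a finite group, p a prime, and Z a normal subgroup of G contained in the hypercenter Z_∞(G). If G/Z has a normal Sylow p-subgroup, then G has a normal Sylow p-subgroup. -/

import Mathlib

open Subgroup
open scoped Pointwise

/-- A partition of the set of all primes into pairwise disjoint nonempty blocks. -/
structure SigmaPartition : Type where
  blocks : Set (Set ℕ)
  nonempty : ∀ s ∈ blocks, s.Nonempty
  mem_prime : ∀ s ∈ blocks, ∀ p ∈ s, p.Prime
  pairwise_disjoint : ∀ s ∈ blocks, ∀ t ∈ blocks, s ≠ t → Disjoint s t
  covers : ∀ p : ℕ, p.Prime → ∃ s ∈ blocks, p ∈ s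

/-- `n` is a σ-primary number: all of its prime divisors lie in a single block of σ. -/
def IsSigmaPrimaryCard (σ : SigmaPartition) (n : ℕ) : Prop :=
  ∃ s ∈ σ.blocks, ∀ p : ℕ, p.Prime → p ∣ n → p ∈ s

/-- A group is σ-primary if all primes dividing its order lie in one block of σ. -/
def IsSigmaPrimary (σ : SigmaPartition) (X : Type*) [Group X] : Prop :=
  IsSigmaPrimaryCard σ (Nat.card X)

section

variable {G : Type*} [Group G]

/-- A subgroup is modular if it is a modular element (in the sense of Kurosh)
of the lattice of all subgroups. -/
def IsModularSubgroup (M : Subgroup G) : Prop :=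
  (∀ X Z : Subgroup G, X ≤ Z → X ⊔ (M ⊓ Z) = (X ⊔ M) ⊓ Z) ∧
  (∀ Y Z : Subgroup G, M ≤ Z → M ⊔ (Y ⊓ Z) = (M ⊔ Y) ⊓ Z)

/-- One step of a σ-subnormal chain: `A ≤ B` and either `A` is normal in `B` or
`B` modulo the normal core of `A` in `B` is σ-primary. -/
def SigmaStep (σ : SigmaPartition) (A B : Subgroup G) : Prop :=
  A ≤ B ∧ ((A.subgroupOf B).Normal ∨
    IsSigmaPrimaryCard σ (Nat.card (↥B ⧸ (A.subgroupOf B).normalCore)))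

/-- `A` is σ-subnormal in the ambient group. -/
def IsSigmaSubnormal (σ : SigmaPartition) (A : Subgroup G) : Prop :=
  ∃ (n : ℕ) (c : Fin (n + 1) → Subgroup G), c 0 = A ∧ c (Fin.last n) = ⊤ ∧
    ∀ i : Fin n, SigmaStep σ (c i.castSucc) (c i.succ)

/-- `A` is σ-quasinormal: σ-subnormal and modular. -/
def IsSigmaQuasinormal (σ : SigmaPartition) (A : Subgroup G) : Prop :=
  IsSigmaSubnormal σ A ∧ IsModularSubgroup A

/-- `A` is σ-quasinormal in the intermediate subgroup `B`. -/
def IsSigmaQuasinormalIn (σ : SigmaPartition) (A B : Subgroup G) : Prop :=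
  A ≤ B ∧ IsSigmaQuasinormal σ (A.subgroupOf B)

/-- `A` is σ-subquasinormal: there is a chain from `A` to the whole group with
each term σ-quasinormal in the next. -/
def IsSigmaSubquasinormal (σ : SigmaPartition) (A : Subgroup G) : Prop :=
  ∃ (n : ℕ) (c : Fin (n + 1) → Subgroup G), c 0 = A ∧ c (Fin.last n) = ⊤ ∧
    ∀ i : Fin n, IsSigmaQuasinormalIn σ (c i.castSucc) (c i.succ)

/-- `H` is subnormal in the ambient group. -/
def IsSubnormalSubgroup (H : Subgroup G) : Prop :=
  ∃ (n : ℕ) (c : Fin (n + 1) → Subgroup G), c 0 = H ∧ c (Fin.last n) = ⊤ ∧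
    ∀ i : Fin n, c i.castSucc ≤ c i.succ ∧ ((c i.castSucc).subgroupOf (c i.succ)).Normal

/-- The factor `H/K` (for `K ≤ H`) is cyclic, elementwise formulation. -/
def IsCyclicFactor (H K : Subgroup G) : Prop :=
  ∃ g ∈ H, ∀ h ∈ H, ∃ n : ℤ, (g ^ n)⁻¹ * h ∈ K

end

/-- `G` is a QσT-group: σ-quasinormality is transitive in `G`. -/
def IsQSigmaT (σ : SigmaPartition) (G : Type*) [Group G] : Prop :=
  ∀ H K : Subgroup G, H ≤ K →
    IsSigmaQuasinormal σ (H.subgroupOf K) → IsSigmaQuasinormal σ K →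
    IsSigmaQuasinormal σ H

/-- `(D, Z; U 1, …, U k)` is a Robinson complex of `G`. -/
def IsRobinsonComplex (G : Type*) [Group G] (D Z : Subgroup G)
    (k : ℕ) (U : Fin k → Subgroup G) : Prop :=
  D ≠ ⊥ ∧ D.Normal ∧ ⁅D, D⁆ = D ∧
  Z = (Subgroup.center ↥D).map D.subtype ∧
  Z = (frattini ↥D).map D.subtype ∧
  (∀ i, Z ≤ U i ∧ U i ≤ D ∧ (U i).Normal) ∧
  (⨆ i, U i) = D ∧
  (∀ i, U i ⊓ (Z ⊔ ⨆ j ∈ ({j | j ≠ i} : Set (Fin k)), U j) = Z) ∧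
  (∀ i, ¬ ⁅U i, U i⁆ ≤ Z) ∧
  (∀ i, ∀ N : Subgroup G, Z ≤ N → N ≤ U i → (N.subgroupOf (U i)).Normal →
    N = Z ∨ N = U i) ∧
  (∀ H K : Subgroup G, H.Normal → K.Normal → K < H → H ≤ Z →
    (∀ N : Subgroup G, N.Normal → K ≤ N → N ≤ H → N = K ∨ N = H) →
    IsCyclicFactor H K)

/-- The largest normal p-subgroup `O_p(X)`. -/
def pCoreSubgroup (p : ℕ) (X : Type*) [Group X] : Subgroup X :=
  sSup {P : Subgroup X | P.Normal ∧ IsPGroup p ↥P}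

/-- `G` satisfies `N_p`: whenever `N` is a soluble normal subgroup of `G`,
p'-elements of `G/N` induce power automorphisms on `O_p(G/N)`. -/
def SatisfiesNp (p : ℕ) (G : Type*) [Group G] : Prop :=
  ∀ (N : Subgroup G) [N.Normal], IsSolvable ↥N →
    ∀ x : G ⧸ N, ¬ p ∣ orderOf x →
      ∀ S : Subgroup (G ⧸ N), S ≤ pCoreSubgroup p (G ⧸ N) →
        ∀ s ∈ S, x * s * x⁻¹ ∈ S

/-- `G` satisfies `P_p`: whenever `N` is a soluble normal subgroup of `G`,
every subgroup of `O_p(G/N)` is quasinormal in every Sylow p-subgroup of `G/N`. -/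
def SatisfiesPp (p : ℕ) (G : Type*) [Group G] : Prop :=
  ∀ (N : Subgroup G) [N.Normal], IsSolvable ↥N →
    ∀ S : Subgroup (G ⧸ N), S ≤ pCoreSubgroup p (G ⧸ N) →
      ∀ P : Sylow p (G ⧸ N), ∀ T : Subgroup (G ⧸ N), T ≤ ↑P →
        (S : Set (G ⧸ N)) * (T : Set (G ⧸ N)) = (T : Set (G ⧸ N)) * (S : Set (G ⧸ N))

/-- `X` is a non-abelian P-group of type `(p, q)`: `X = A ⋊ ⟨t⟩` with `A` a non-trivial
elementary abelian p-group and `t` of prime order `q ≠ p` inducing a non-trivial power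
automorphism on `A`. -/
def IsPGroupOfType (p q : ℕ) (X : Type*) [Group X] : Prop :=
  p.Prime ∧ q.Prime ∧ p ≠ q ∧
  ∃ (A : Subgroup X) (t : X),
    A ≠ ⊥ ∧ (∀ a ∈ A, a ^ p = 1) ∧ (∀ a ∈ A, ∀ b ∈ A, a * b = b * a) ∧
    orderOf t = q ∧ A.Normal ∧ A ⊔ Subgroup.zpowers t = ⊤ ∧
    A ⊓ Subgroup.zpowers t = ⊥ ∧
    (∀ S : Subgroup X, S ≤ A → ∀ s ∈ S, t * s * t⁻¹ ∈ S) ∧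
    ∃ a ∈ A, t * a * t⁻¹ ≠ a

/-- `G` satisfies `Q_{σ(p,q)}`. -/
def SatisfiesQSigmaPQ (σ : SigmaPartition) (p q : ℕ) (G : Type*) [Group G] : Prop :=
  ∀ (N : Subgroup G) [N.Normal], IsSolvable ↥N →
    ∀ P : Subgroup (G ⧸ N), P.Normal → IsSigmaPrimary σ ↥P → IsPGroupOfType p q ↥P →
      ∀ S : Subgroup (G ⧸ N), S ≤ P → IsModularSubgroup S

/-- `G` satisfies `M_{p,q}`. -/
def SatisfiesMpq (p q : ℕ) (G : Type*) [Group G] : Prop :=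
  ∀ (N : Subgroup G) [N.Normal], IsSolvable ↥N →
    ∀ P : Subgroup (G ⧸ N), P.Normal → IsPGroupOfType p q ↥P →
      ∀ S : Subgroup (G ⧸ N), S ≤ P → IsModularSubgroup S


private lemma mem_ucs_subgroupOf' {G : Type*} [Group G] (H : Subgroup G) :
    ∀ (n : ℕ) (x : H), (x : G) ∈ Subgroup.upperCentralSeries G n → x ∈ Subgroup.upperCentralSeries H n := by
  intro n
  induction n with
  | zero =>
    intro x hx
    rw [Subgroup.upperCentralSeries_zero, Subgroup.mem_bot] at hx ⊢
    exact Subtype.ext hx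
  | succ n ih =>
    intro x hx
    rw [Subgroup.mem_upperCentralSeries_succ_iff] at hx ⊢
    intro y
    exact ih _ (by push_cast; exact hx (y : G))

universe u

private lemma nilpotent_of_le_ucs' :
    ∀ (m : ℕ) {G : Type u} [Group G] (Z : Subgroup G) [Z.Normal],
      Z ≤ Subgroup.upperCentralSeries G m → Group.IsNilpotent (G ⧸ Z) → Group.IsNilpotent G := by
  intro m
  induction m with
  | zero =>
    intro G _ Z _ hle hnil
    haveI := hnil; refine Subgroup.isNilpotent_of_ker_le_center (QuotientGroup.mk' Z) ?_
    rw [QuotientGroup.ker_mk']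
    intro x hx
    have hx1 : x = 1 := by
      simpa [Subgroup.upperCentralSeries_zero, Subgroup.mem_bot] using hle hx
    rw [hx1]; exact (Subgroup.center G).one_mem
  | succ m ih =>
    intro G _ Z _ hle hnil
    apply of_quotient_center_nilpotent
    letI f := QuotientGroup.mk' (Subgroup.center G)
    haveI : (Z.map f).Normal :=
      Subgroup.Normal.map ‹Z.Normal› f QuotientGroup.mk_surjective
    refine ih (Z.map f) ?_ ?_
    · rintro _ ⟨x, hx, rfl⟩
      have hx' : x ∈ Subgroup.comap f (Subgroup.upperCentralSeries (G ⧸ Subgroup.center G) m) := by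
        rw [Subgroup.comap_upperCentralSeries_quotient_center]
        exact hle hx
      exact hx'
    · letI φ : G →* (G ⧸ Subgroup.center G) ⧸ (Z.map f) :=
        (QuotientGroup.mk' (Z.map f)).comp f
      have hker : ∀ z ∈ Z, φ z = 1 := by
        intro z hz
        have : f z ∈ Z.map f := Subgroup.mem_map_of_mem f hz
        simpa [φ, QuotientGroup.eq_one_iff] using this
      have hsurj : Function.Surjective φ :=
        (QuotientGroup.mk_surjective).comp (QuotientGroup.mk_surjective)
      refine nilpotent_of_surjective (QuotientGroup.lift Z φ hker) ?_
      intro y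
      obtain ⟨x, rfl⟩ := hsurj y
      exact ⟨QuotientGroup.mk x, rfl⟩

/-- Lemma 2.9: if `Z ≤ Z_∞(G)` is normal and `G/Z` is p-closed, then `G` is p-closed. -/
theorem pClosed_of_quotient_hypercenter (G : Type*) [Group G] [Finite G]
    (p : ℕ) (hp : p.Prime) (Z : Subgroup G) [Z.Normal]
    (hZ : Z ≤ ⨆ n : ℕ, _root_.upperCentralSeries G n)
    (h : ∃ P : Sylow p (G ⧸ Z), (P : Subgroup (G ⧸ Z)).Normal) :
    ∃ P : Sylow p G, (P : Subgroup G).Normal := by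
  haveI : Fact p.Prime := ⟨hp⟩
  obtain ⟨Pbar, hPbar⟩ := h
  haveI := hPbar
  have hmono : Monotone (Subgroup.upperCentralSeries G) := Subgroup.upperCentralSeries_mono G
  obtain ⟨m, hm⟩ : ∃ m : ℕ, Z ≤ Subgroup.upperCentralSeries G m := by
    have hd : Directed (· ≤ ·) (fun n => Subgroup.upperCentralSeries G n) := hmono.directed_le
    haveI : Fintype Z := Fintype.ofFinite _
    have hx : ∀ x : Z, ∃ n, (x : G) ∈ Subgroup.upperCentralSeries G n := fun x =>
      (Subgroup.mem_iSup_of_directed hd).mp (hZ x.2)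
    choose nf hnf using hx
    refine ⟨Finset.univ.sup nf, fun x hx' => ?_⟩
    exact hmono (Finset.le_sup (Finset.mem_univ ⟨x, hx'⟩)) (hnf ⟨x, hx'⟩)
  set N : Subgroup G := (Pbar : Subgroup (G ⧸ Z)).comap (QuotientGroup.mk' Z) with hNdef
  haveI hNnormal : N.Normal := hPbar.comap _
  have hpq : IsPGroup p (N ⧸ Z.subgroupOf N) := by
    intro g
    obtain ⟨x, rfl⟩ := QuotientGroup.mk_surjective g
    have hx : (QuotientGroup.mk' Z) (x : G) ∈ (Pbar : Subgroup (G ⧸ Z)) := x.2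
    obtain ⟨k, hk⟩ := Pbar.isPGroup' ⟨_, hx⟩
    refine ⟨k, ?_⟩
    have hk' : ((QuotientGroup.mk' Z) (x : G)) ^ p ^ k = 1 := by
      have := congrArg Subtype.val hk
      push_cast at this
      exact this
    have hmem : ((x : G)) ^ p ^ k ∈ Z := by
      rw [← QuotientGroup.eq_one_iff]
      simpa [map_pow, QuotientGroup.mk'_apply] using hk'
    show (QuotientGroup.mk' (Z.subgroupOf N)) x ^ p ^ k = 1
    rw [← map_pow, QuotientGroup.mk'_apply, QuotientGroup.eq_one_iff]
    rw [Subgroup.mem_subgroupOf]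
    push_cast
    exact hmem
  have hZ' : Z.subgroupOf N ≤ Subgroup.upperCentralSeries N m := fun x hx =>
    mem_ucs_subgroupOf' N m x (hm (Subgroup.mem_subgroupOf.mp hx))
  haveI hNnil : Group.IsNilpotent N :=
    nilpotent_of_le_ucs' m (Z.subgroupOf N) hZ' hpq.isNilpotent
  obtain ⟨P⟩ : Nonempty (Sylow p N) := inferInstance
  have hPn : (P : Subgroup N).Normal :=
    Sylow.normal_of_all_max_subgroups_normal
      (fun H hH => NormalizerCondition.normal_of_coatom H normalizerCondition_of_isNilpotent hH) P
  haveI hchar : (P : Subgroup N).Characteristic := P.characteristic_of_normal hPn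
  haveI : ((P : Subgroup N).map N.subtype).Normal := inferInstance
  obtain ⟨Q, hPQ⟩ := (P.isPGroup'.map N.subtype).exists_le_sylow
  have hQN : (Q : Subgroup G) ≤ N := by
    obtain ⟨R, hR⟩ := (Q.isPGroup'.map (QuotientGroup.mk' Z)).exists_le_sylow
    obtain ⟨g, rfl⟩ := MulAction.exists_smul_eq (G ⧸ Z) Pbar R
    rw [Sylow.smul_eq_of_normal] at hR
    intro x hx
    exact Subgroup.mem_comap.mpr (hR (Subgroup.mem_map_of_mem _ hx))
  have hPle : (P : Subgroup N) ≤ (Q : Subgroup G).subgroupOf N :=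
    Subgroup.map_le_iff_le_comap.mp hPQ
  have heq : (Q : Subgroup G).subgroupOf N = P :=
    P.is_maximal' Q.isPGroup'.comap_subtype hPle
  refine ⟨Q, ?_⟩
  have hQeq : (Q : Subgroup G) = (P : Subgroup N).map N.subtype := by
    rw [← heq, Subgroup.subgroupOf_map_subtype, inf_eq_left.mpr hQN]
  rw [hQeq]
  infer_instance
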